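/- The function $w_s(s) = e^{s^2}\,\mathrm{erfc}(s)$ (the Faddeeva function evaluated at $\iota s$, i.e. $w(\iota s)$) is a positive real function: it is real-valued for real $s$, and $\Re[w_s(s)] \ge 0$ whenever $\Re[s] > 0$. -/

import Mathlib

open Complex

/-- Complex error function via a parametrized integral. -/
noncomputable def cerf (z : ℂ) : ℂ :=
  (2 / Real.sqrt Real.pi) * ∫ t in (0:ℝ)..1, z * Complex.exp (-((t:ℂ) * z)^2)

/-- Complex complementary error function. -/
noncomputable def cerfc (z : ℂ) : ℂ := 1 - cerf z

/-- The Faddeeva function of imaginary argument, `w_s(s) = w(I s) = e^{s^2} erfc(s)`. -/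
noncomputable def ws (s : ℂ) : ℂ := Complex.exp (s^2) * cerfc s

section WsAux

open Complex MeasureTheory Real Set Filter Topology

set_option maxHeartbeats 1000000


lemma re_sq_lower (s : ℂ) {R u r : ℝ} (hr : |r| ≤ R) (hu : 0 ≤ u) :
    -((((u:ℂ) + r*s))^2).re ≤ -u^2 + (2*R*‖s‖)*u + R^2*‖s‖^2 := by
  have hre : (((u:ℂ) + r*s)^2).re = (u + r*s.re)^2 - (r*s.im)^2 := by
    rw [sq, Complex.mul_re]
    simp [Complex.add_re, Complex.add_im, Complex.mul_re, Complex.mul_im]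
    ring
  rw [hre]
  have hR : (0:ℝ) ≤ R := (abs_nonneg r).trans hr
  have hsre : |s.re| ≤ ‖s‖ := Complex.abs_re_le_norm s
  have hsim : |s.im| ≤ ‖s‖ := Complex.abs_im_le_norm s
  have h1 : |r * s.re| ≤ R * ‖s‖ := by
    rw [abs_mul]; exact mul_le_mul hr hsre (abs_nonneg _) hR
  have h2 : |r * s.im| ≤ R * ‖s‖ := by
    rw [abs_mul]; exact mul_le_mul hr hsim (abs_nonneg _) hR
  have h1' : -(R*‖s‖) ≤ r * s.re := neg_le_of_abs_le h1
  have h2' : (r*s.im)^2 ≤ (R*‖s‖)^2 := by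
    rw [← _root_.sq_abs (r*s.im)]
    exact pow_le_pow_left₀ (abs_nonneg _) h2 2
  nlinarith [sq_nonneg (r*s.re), mul_le_mul_of_nonneg_left h1' hu]

lemma norm_cexp' (z : ℂ) : ‖Complex.exp z‖ = Real.exp z.re := by
  rw [Complex.norm_exp]

lemma int_abs_gauss (c : ℝ) : Integrable (fun v : ℝ => (|v| + c) * Real.exp (-v^2)) := by
  have h1 := (integrable_mul_exp_neg_mul_sq (one_pos : (0:ℝ) < 1)).abs
  have h2 := integrable_exp_neg_mul_sq (one_pos : (0:ℝ) < 1)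
  have h3 := h1.add (h2.const_mul c)
  apply h3.congr
  filter_upwards with v
  simp only [Pi.add_apply, abs_mul, _root_.abs_of_nonneg (Real.exp_pos _).le]
  ring_nf

lemma int_lin_gauss (K : ℝ) : Integrable (fun u : ℝ => (u + 1) * Real.exp (-u^2 + K*u)) := by
  have hb : Integrable (fun u : ℝ =>
      ((|u - K/2| + (|K|/2 + 1)) * Real.exp (-(u - K/2)^2)) * Real.exp (K^2/4)) :=
    ((int_abs_gauss (|K|/2 + 1)).comp_sub_right (K/2)).mul_const _
  apply hb.mono'
  · apply Continuous.aestronglyMeasurable; continuity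
  · filter_upwards with u
    rw [Real.norm_eq_abs, abs_mul, _root_.abs_of_nonneg (Real.exp_pos _).le]
    have h1 : Real.exp (-u^2 + K*u) = Real.exp (-(u - K/2)^2) * Real.exp (K^2/4) := by
      rw [← Real.exp_add]; ring_nf
    rw [h1, ← mul_assoc]
    have h2 : |u + 1| ≤ |u - K/2| + (|K|/2 + 1) := by
      have := abs_sub_abs_le_abs_sub (u+1) (u - K/2)
      have h3 : |u + 1 - (u - K/2)| ≤ |K|/2 + 1 := by
        rw [show u + 1 - (u - K/2) = K/2 + 1 by ring]
        calc |K/2 + 1| ≤ |K/2| + 1 := by simpa using abs_add_le (K/2) 1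
        _ = |K|/2 + 1 := by rw [abs_div]; norm_num
      linarith
    have h4 := mul_le_mul_of_nonneg_right h2 (Real.exp_pos (-(u - K/2)^2)).le
    exact mul_le_mul_of_nonneg_right h4 (Real.exp_pos (K^2/4)).le

lemma cpow_half_pi : ((Real.pi : ℂ)) ^ (1/2 : ℂ) = (Real.sqrt Real.pi : ℂ) := by
  rw [show (1/2 : ℂ) = ((1/2 : ℝ) : ℂ) by norm_num, ← Complex.ofReal_cpow Real.pi_pos.le]
  congr 1
  rw [Real.sqrt_eq_rpow]

lemma key (s : ℂ) (hs : s ≠ 0) :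
    (∫ u in Ioi (0:ℝ), Complex.exp (-((u:ℂ) + s)^2))
      + (∫ t in (0:ℝ)..1, s * Complex.exp (-((t:ℂ)*s)^2))
      = (Real.sqrt Real.pi : ℂ)/2 := by
  set φ : ℝ → ℂ := fun r =>
    (∫ u in Ioi (0:ℝ), Complex.exp (-((u:ℂ) + r*s)^2))
      + (∫ t in (0:ℝ)..r, s * Complex.exp (-((t:ℂ)*s)^2)) with hφ
  have hcont_seg : Continuous fun t : ℝ => s * Complex.exp (-((t:ℂ)*s)^2) := by continuity
  -- derivative of the segment integral
  have hσ : ∀ r₀ : ℝ, HasDerivAt (fun r : ℝ => ∫ t in (0:ℝ)..r, s * Complex.exp (-((t:ℂ)*s)^2))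
      (s * Complex.exp (-((r₀:ℂ)*s)^2)) r₀ := fun r₀ =>
    intervalIntegral.integral_hasDerivAt_right (hcont_seg.intervalIntegrable _ _)
      (hcont_seg.stronglyMeasurableAtFilter _ _) hcont_seg.continuousAt
  -- pointwise derivatives
  have base : ∀ (r u : ℝ), HasDerivAt (fun r : ℝ => Complex.exp (-((u:ℂ) + r*s)^2))
      ((-2*s*((u:ℂ)+r*s)) * Complex.exp (-((u:ℂ)+r*s)^2)) r := by
    intro r u
    have h1 : HasDerivAt (fun w : ℂ => (u:ℂ) + w*s) s (r:ℂ) := by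
      simpa using ((hasDerivAt_id ((r:ℂ))).mul_const s).const_add ((u:ℂ))
    have h4 := (((h1.pow 2).neg).cexp).comp_ofReal
    convert h4 using 1
    show _ = Complex.exp (-((u:ℂ) + r*s)^2) * _
    simp only [Pi.neg_apply, Pi.pow_apply, Nat.cast_ofNat, show (2:ℕ) - 1 = 1 from rfl, pow_one]
    ring
    rfl
  have baseu : ∀ (r u : ℝ), HasDerivAt (fun u : ℝ => Complex.exp (-((u:ℂ) + r*s)^2))
      ((-2*((u:ℂ)+r*s)) * Complex.exp (-((u:ℂ)+r*s)^2)) u := by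
    intro r u
    have h1 : HasDerivAt (fun w : ℂ => w + (r:ℂ)*s) 1 (u:ℂ) := (hasDerivAt_id _).add_const _
    have h4 := (((h1.pow 2).neg).cexp).comp_ofReal
    convert h4 using 1
    show _ = Complex.exp (-((u:ℂ) + r*s)^2) * _
    simp only [Pi.neg_apply, Pi.pow_apply, Nat.cast_ofNat, show (2:ℕ) - 1 = 1 from rfl, pow_one]
    ring
    rfl
  -- derivative of the Ioi integral
  have hψ : ∀ r₀ : ℝ, HasDerivAt (fun r : ℝ => ∫ u in Ioi (0:ℝ), Complex.exp (-((u:ℂ) + r*s)^2))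
      (-(s * Complex.exp (-((r₀:ℂ)*s)^2))) r₀ := by
    intro r₀
    set R : ℝ := |r₀| + 1 with hR
    set K : ℝ := 2*R*‖s‖ with hK
    have hRpos : 0 < R := by positivity
    have hrR : ∀ r ∈ Metric.ball r₀ 1, |r| ≤ R := by
      intro r hr
      rw [Metric.mem_ball, Real.dist_eq] at hr
      calc |r| = |r₀ + (r - r₀)| := by ring_nf
        _ ≤ |r₀| + |r - r₀| := abs_add_le _ _
        _ ≤ R := by rw [hR]; linarith
  -- norm bound for the derivative integrand
    have hnormb : ∀ (r u : ℝ), |r| ≤ R → 0 ≤ u →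
        ‖(-2*s*((u:ℂ)+r*s)) * Complex.exp (-((u:ℂ)+r*s)^2)‖
          ≤ (2*‖s‖*(1+R*‖s‖)*Real.exp (R^2*‖s‖^2)) * ((u+1) * Real.exp (-u^2 + K*u)) := by
      intro r u hr hu
      rw [norm_mul, norm_cexp']
      have e1 : ‖(-2*s*((u:ℂ)+r*s))‖ ≤ 2*‖s‖*((1+R*‖s‖)*(u+1)) := by
        rw [show (-2*s*((u:ℂ)+r*s)) = (-2)*(s*((u:ℂ)+r*s)) by ring, norm_mul, norm_mul]
        have eu : ‖((u:ℝ):ℂ)‖ = u := by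
          rw [Complex.norm_real, Real.norm_eq_abs, _root_.abs_of_nonneg hu]
        have ers : ‖((r:ℝ):ℂ)*s‖ ≤ R*‖s‖ := by
          rw [norm_mul, Complex.norm_real, Real.norm_eq_abs]
          exact mul_le_mul_of_nonneg_right hr (norm_nonneg s)
        have e2 : ‖(u:ℂ)+r*s‖ ≤ u + R*‖s‖ := by
          have := norm_add_le ((u:ℝ):ℂ) (((r:ℝ):ℂ)*s)
          rw [eu] at this
          linarith
        have e3 : u + R*‖s‖ ≤ (1+R*‖s‖)*(u+1) := by nlinarith [mul_nonneg (mul_nonneg hRpos.le (norm_nonneg s)) hu]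
        have e4 : ‖(-2 : ℂ)‖ = 2 := by norm_num
        rw [e4]
        nlinarith [norm_nonneg s, mul_le_mul_of_nonneg_left (e2.trans e3) (norm_nonneg s)]
      have e5 : Real.exp ((-((u:ℂ)+r*s)^2).re) ≤ Real.exp (R^2*‖s‖^2) * Real.exp (-u^2 + K*u) := by
        rw [← Real.exp_add]
        apply Real.exp_le_exp.mpr
        have h6 := re_sq_lower s hr hu
        rw [Complex.neg_re, hK]
        linarith [h6]
      calc ‖(-2*s*((u:ℂ)+r*s))‖ * Real.exp ((-((u:ℂ)+r*s)^2).re)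
          ≤ (2*‖s‖*((1+R*‖s‖)*(u+1))) * (Real.exp (R^2*‖s‖^2) * Real.exp (-u^2 + K*u)) := by
            apply mul_le_mul e1 e5 (Real.exp_pos _).le (by positivity)
        _ = (2*‖s‖*(1+R*‖s‖)*Real.exp (R^2*‖s‖^2)) * ((u+1) * Real.exp (-u^2 + K*u)) := by ring
    -- apply dominated convergence for derivative
    have hdom := hasDerivAt_integral_of_dominated_loc_of_deriv_le
      (F := fun (r : ℝ) (u : ℝ) => Complex.exp (-((u:ℂ) + r*s)^2))
      (F' := fun (r : ℝ) (u : ℝ) => (-2*s*((u:ℂ)+r*s)) * Complex.exp (-((u:ℂ)+r*s)^2))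
      (bound := fun u => (2*‖s‖*(1+R*‖s‖)*Real.exp (R^2*‖s‖^2)) * ((u+1) * Real.exp (-u^2 + K*u)))
      (μ := volume.restrict (Ioi (0:ℝ))) (x₀ := r₀) (Metric.ball_mem_nhds r₀ one_pos)
      (Filter.Eventually.of_forall fun r =>
        (Continuous.aestronglyMeasurable (by continuity)))
      ?_ (Continuous.aestronglyMeasurable (by continuity)) ?_
      (((int_lin_gauss K).const_mul _).integrableOn) ?_
    · obtain ⟨hF'int, hder⟩ := hdom
      have hval : (∫ u in Ioi (0:ℝ), (-2*s*((u:ℂ)+r₀*s)) * Complex.exp (-((u:ℂ)+r₀*s)^2))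
          = -(s * Complex.exp (-((r₀:ℂ)*s)^2)) := by
        have g'int : IntegrableOn (fun u : ℝ =>
            (-2*((u:ℂ)+r₀*s)) * Complex.exp (-((u:ℂ)+r₀*s)^2)) (Ioi 0) := by
          apply (hF'int.const_mul s⁻¹).congr
          filter_upwards with u
          field_simp
        have gtend : Tendsto (fun u : ℝ => Complex.exp (-((u:ℂ)+r₀*s)^2)) atTop (𝓝 0) := by
          apply squeeze_zero_norm' ?_ ?_
          · exact fun u => Real.exp (-(u - K/2)^2 + (K^2/4 + R^2*‖s‖^2))
          · filter_upwards [eventually_ge_atTop (0:ℝ)] with u hu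
            rw [norm_cexp']
            apply Real.exp_le_exp.mpr
            have h6 := re_sq_lower s (le_of_lt (by rw [hR]; linarith [abs_nonneg r₀, le_abs_self r₀] : |r₀| < R)) hu
            rw [Complex.neg_re]
            rw [← hK] at h6
            clear_value R K
            nlinarith [h6]
          · have h7 : Tendsto (fun u : ℝ => (u - K/2)^2) atTop atTop :=
              (tendsto_pow_atTop (two_ne_zero)).comp
                (tendsto_atTop_add_const_right atTop (-(K/2)) tendsto_id)
            have h8 : Tendsto (fun u : ℝ => -(u - K/2)^2 + (K^2/4 + R^2*‖s‖^2)) atTop atBot :=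
              tendsto_atBot_add_const_right atTop _ (tendsto_neg_atBot_iff.mpr h7)
            exact Real.tendsto_exp_atBot.comp h8
        have hIoi := integral_Ioi_of_hasDerivAt_of_tendsto'
          (fun u _ => baseu r₀ u) g'int gtend
        calc (∫ u in Ioi (0:ℝ), (-2*s*((u:ℂ)+r₀*s)) * Complex.exp (-((u:ℂ)+r₀*s)^2))
            = ∫ u in Ioi (0:ℝ), s * ((-2*((u:ℂ)+r₀*s)) * Complex.exp (-((u:ℂ)+r₀*s)^2)) := by
              apply integral_congr_ae; filter_upwards with u; ring
          _ = s * ∫ u in Ioi (0:ℝ), (-2*((u:ℂ)+r₀*s)) * Complex.exp (-((u:ℂ)+r₀*s)^2) :=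
              integral_const_mul _ _
          _ = -(s * Complex.exp (-((r₀:ℂ)*s)^2)) := by
              rw [hIoi]
              simp
      rw [hval] at hder
      exact hder
    · -- integrability of F r₀
      apply Integrable.mono' (((int_lin_gauss K).const_mul (Real.exp (R^2*‖s‖^2))).integrableOn)
      · apply Continuous.aestronglyMeasurable; continuity
      · filter_upwards [ae_restrict_mem measurableSet_Ioi] with u hu
        rw [norm_cexp']
        have h6 := re_sq_lower s (le_of_lt (by rw [hR]; linarith [le_abs_self r₀] : |r₀| < R)) (le_of_lt hu)
        calc Real.exp ((-((u:ℂ)+r₀*s)^2).re) ≤ Real.exp (-u^2 + K*u + R^2*‖s‖^2) := by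
              apply Real.exp_le_exp.mpr
              rw [Complex.neg_re, hK]
              linarith [h6]
          _ = Real.exp (R^2*‖s‖^2) * Real.exp (-u^2 + K*u) := by rw [← Real.exp_add]; ring_nf
          _ ≤ Real.exp (R^2*‖s‖^2) * ((u+1) * Real.exp (-u^2 + K*u)) := by
              have h7 : (1:ℝ) ≤ u + 1 := by have := mem_Ioi.mp hu; linarith
              have h8 := mul_le_mul_of_nonneg_right h7 (Real.exp_pos (-u^2+K*u)).le
              have h9 := mul_le_mul_of_nonneg_left h8 (Real.exp_pos (R^2*‖s‖^2)).le
              simpa using h9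
    · -- bound
      filter_upwards [ae_restrict_mem measurableSet_Ioi] with u hu r hr
      exact hnormb r u (hrR r hr) hu.le
    · -- differentiability
      filter_upwards with u r _
      exact base r u
  -- φ has zero derivative
  have hφd : ∀ r : ℝ, HasDerivAt φ 0 r := by
    intro r
    have h := (hψ r).add (hσ r)
    rw [neg_add_cancel] at h
    exact h
  have hconst : φ 1 = φ 0 :=
    is_const_of_deriv_eq_zero (fun r => (hφd r).differentiableAt)
      (fun r => (hφd r).deriv) 1 0
  have hφ0 : φ 0 = (Real.sqrt Real.pi : ℂ)/2 := by
    have e0 : φ 0 = ∫ u in Ioi (0:ℝ), Complex.exp (-1 * (u:ℂ)^2) := by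
      rw [hφ]
      simp only [Complex.ofReal_zero, zero_mul, add_zero, intervalIntegral.integral_same]
      apply integral_congr_ae; filter_upwards with u
      norm_num
    rw [e0, integral_gaussian_complex_Ioi (by norm_num)]
    rw [show ((Real.pi : ℂ)/1) = (Real.pi : ℂ) by norm_num, cpow_half_pi]
  have hφ1 : φ 1 = (∫ u in Ioi (0:ℝ), Complex.exp (-((u:ℂ) + s)^2))
      + (∫ t in (0:ℝ)..1, s * Complex.exp (-((t:ℂ)*s)^2)) := by
    rw [hφ]
    norm_num
  rw [← hφ1, hconst, hφ0]


lemma tendsto_exp_neg_mul {a : ℝ} (ha : 0 < a) :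
    Tendsto (fun u : ℝ => Real.exp (-(a * u))) atTop (𝓝 0) :=
  Real.tendsto_exp_atBot.comp
    ((tendsto_neg_atBot_iff.mpr) (Tendsto.const_mul_atTop ha tendsto_id))

lemma int_cexp_Ioi {c : ℂ} (hc : 0 < c.re) : ∫ u in Ioi (0:ℝ), Complex.exp (-(c * u)) = 1/c := by
  have hc0 : c ≠ 0 := fun h => by simp [h] at hc
  have hderiv : ∀ u ∈ Ici (0:ℝ), HasDerivAt (fun u : ℝ => -Complex.exp (-(c * u)) / c)
      (Complex.exp (-(c * u))) u := by
    intro u _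
    have h1 : HasDerivAt (fun w : ℂ => -Complex.exp (-(c * w)) / c)
        (-(Complex.exp (-(c * u)) * -(c * 1)) / c) (u : ℂ) :=
      (((hasDerivAt_id (u:ℂ)).const_mul c).neg.cexp.neg).div_const c
    have h2 := h1.comp_ofReal
    convert h2 using 1
    field_simp
  have hnorm : ∀ u : ℝ, ‖Complex.exp (-(c * u))‖ = Real.exp (-(c.re * u)) := by
    intro u
    rw [Complex.norm_exp]
    congr 1
    simp [Complex.mul_re]
  have hint : IntegrableOn (fun u : ℝ => Complex.exp (-(c * u))) (Ioi 0) := by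
    apply Integrable.mono' (exp_neg_integrableOn_Ioi 0 hc)
    · apply Continuous.aestronglyMeasurable; continuity
    · filter_upwards with u
      rw [hnorm u]
      exact le_of_eq (by ring_nf)
  have htend : Tendsto (fun u : ℝ => -Complex.exp (-(c * u)) / c) atTop (𝓝 0) := by
    refine squeeze_zero_norm (fun u => ?_) (by simpa using (tendsto_exp_neg_mul hc).div_const ‖c‖ :
        Tendsto (fun u : ℝ => Real.exp (-(c.re * u)) / ‖c‖) atTop (𝓝 0))
    rw [norm_div, norm_neg, hnorm u]
  have := integral_Ioi_of_hasDerivAt_of_tendsto' hderiv hint htend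
  rw [this]
  simp only [Complex.ofReal_zero, mul_zero, neg_zero, Complex.exp_zero, zero_sub, neg_div, neg_neg,
    one_div]
lemma gauss_fourier (a : ℝ) :
    ∫ t : ℝ, Complex.exp (-(t:ℂ)^2 + (a:ℂ)*I*t) = (Real.sqrt Real.pi : ℂ) * Complex.exp (-(a:ℂ)^2/4) := by
  have h := GaussianFourier.integral_cexp_neg_mul_sq_add_real_mul_I (b := 1) (by norm_num) (-a/2)
  have heq : ∀ t : ℝ, Complex.exp (-(t:ℂ)^2 + (a:ℂ)*I*t)
      = Complex.exp (-1 * ((t:ℂ) + (-a/2 : ℝ) * I)^2) * Complex.exp (-(a:ℂ)^2/4) := by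
    intro t
    rw [← Complex.exp_add]
    congr 1
    push_cast
    linear_combination ((a:ℂ)^2/4) * Complex.I_sq
  calc ∫ t : ℝ, Complex.exp (-(t:ℂ)^2 + (a:ℂ)*I*t)
      = ∫ t : ℝ, Complex.exp (-1 * ((t:ℂ) + (-a/2 : ℝ) * I)^2) * Complex.exp (-(a:ℂ)^2/4) := by
        exact integral_congr_ae (Filter.Eventually.of_forall heq)
    _ = (∫ t : ℝ, Complex.exp (-1 * ((t:ℂ) + (-a/2 : ℝ) * I)^2)) * Complex.exp (-(a:ℂ)^2/4) :=
        integral_mul_const _ _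
    _ = (Real.sqrt Real.pi : ℂ) * Complex.exp (-(a:ℂ)^2/4) := by
        rw [h]
        norm_num [cpow_half_pi]

lemma fubini_step {s : ℂ} (hs : 0 < s.re) :
    (Real.sqrt Real.pi : ℂ) * ∫ u in Ioi (0:ℝ), Complex.exp (-(u:ℂ)^2 - 2*s*u)
      = ∫ t : ℝ, Complex.exp (-(t:ℂ)^2) * (2*s - 2*I*t)⁻¹ := by
  have hmeas : AEStronglyMeasurable
      (Function.uncurry fun (t u : ℝ) => Complex.exp (-(t:ℂ)^2 - 2*s*u + 2*I*t*u))
      (volume.prod (volume.restrict (Ioi (0:ℝ)))) := by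
    apply Continuous.aestronglyMeasurable
    apply Complex.continuous_exp.comp
    fun_prop
  have hint : Integrable (Function.uncurry fun (t u : ℝ) => Complex.exp (-(t:ℂ)^2 - 2*s*u + 2*I*t*u))
      (volume.prod (volume.restrict (Ioi (0:ℝ)))) := by
    have hprod : Integrable (fun z : ℝ × ℝ => Real.exp (-1*z.1^2) * Real.exp (-(2*s.re)*z.2))
        (volume.prod (volume.restrict (Ioi (0:ℝ)))) :=
      (integrable_exp_neg_mul_sq one_pos).mul_prod (exp_neg_integrableOn_Ioi 0 (by positivity))
    apply hprod.mono' hmeas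
    filter_upwards with z
    rw [Function.uncurry, norm_cexp']
    have hre2 : (-(z.1:ℂ)^2 - 2*s*z.2 + 2*I*z.1*z.2).re = -z.1^2 - 2*s.re*z.2 := by
      simp [Complex.sub_re, Complex.add_re, Complex.mul_re, Complex.mul_im,
        ← Complex.ofReal_pow]
    rw [hre2, ← Real.exp_add]
    apply le_of_eq
    congr 1
    ring
  have hswap := integral_integral_swap hint
  -- left side : ∫ t, ∫ u, f t u
  have hleft : ∀ t : ℝ, (∫ u in Ioi (0:ℝ), Complex.exp (-(t:ℂ)^2 - 2*s*u + 2*I*t*u))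
      = Complex.exp (-(t:ℂ)^2) * (2*s - 2*I*t)⁻¹ := by
    intro t
    have hre : 0 < (2*s - 2*I*t).re := by
      simp [Complex.sub_re, Complex.mul_re]
      positivity
    have h1 : ∀ u : ℝ, Complex.exp (-(t:ℂ)^2 - 2*s*u + 2*I*t*u)
        = Complex.exp (-(t:ℂ)^2) * Complex.exp (-((2*s - 2*I*t) * u)) := by
      intro u
      rw [← Complex.exp_add]
      congr 1
      ring
    calc (∫ u in Ioi (0:ℝ), Complex.exp (-(t:ℂ)^2 - 2*s*u + 2*I*t*u))
        = ∫ u in Ioi (0:ℝ), Complex.exp (-(t:ℂ)^2) * Complex.exp (-((2*s - 2*I*t) * u)) := by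
          apply integral_congr_ae; filter_upwards with u; rw [h1]
      _ = Complex.exp (-(t:ℂ)^2) * ∫ u in Ioi (0:ℝ), Complex.exp (-((2*s - 2*I*t) * u)) :=
          integral_const_mul _ _
      _ = Complex.exp (-(t:ℂ)^2) * (2*s - 2*I*t)⁻¹ := by rw [int_cexp_Ioi hre, one_div]
  -- right side : ∫ u, ∫ t, f t u
  have hright : ∀ u : ℝ, (∫ t : ℝ, Complex.exp (-(t:ℂ)^2 - 2*s*u + 2*I*t*u))
      = (Real.sqrt Real.pi : ℂ) * Complex.exp (-(u:ℂ)^2 - 2*s*u) := by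
    intro u
    have h1 : ∀ t : ℝ, Complex.exp (-(t:ℂ)^2 - 2*s*u + 2*I*t*u)
        = Complex.exp (-(2*s*u)) * Complex.exp (-(t:ℂ)^2 + ((2*u:ℝ):ℂ)*I*t) := by
      intro t
      rw [← Complex.exp_add]
      congr 1
      push_cast
      ring
    calc (∫ t : ℝ, Complex.exp (-(t:ℂ)^2 - 2*s*u + 2*I*t*u))
        = ∫ t : ℝ, Complex.exp (-(2*s*u)) * Complex.exp (-(t:ℂ)^2 + ((2*u:ℝ):ℂ)*I*t) := by
          apply integral_congr_ae; filter_upwards with t; rw [h1]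
      _ = Complex.exp (-(2*s*u)) * ∫ t : ℝ, Complex.exp (-(t:ℂ)^2 + ((2*u:ℝ):ℂ)*I*t) :=
          integral_const_mul _ _
      _ = (Real.sqrt Real.pi : ℂ) * Complex.exp (-(u:ℂ)^2 - 2*s*u) := by
          rw [gauss_fourier (2*u), ← mul_assoc, mul_comm (Complex.exp _), mul_assoc,
            ← Complex.exp_add]
          congr 2
          push_cast
          ring
  calc (Real.sqrt Real.pi : ℂ) * ∫ u in Ioi (0:ℝ), Complex.exp (-(u:ℂ)^2 - 2*s*u)
      = ∫ u in Ioi (0:ℝ), (Real.sqrt Real.pi : ℂ) * Complex.exp (-(u:ℂ)^2 - 2*s*u) :=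
        (integral_const_mul _ _).symm
    _ = ∫ u in Ioi (0:ℝ), ∫ t : ℝ, Complex.exp (-(t:ℂ)^2 - 2*s*u + 2*I*t*u) := by
        apply integral_congr_ae; filter_upwards with u; rw [hright u]
    _ = ∫ t : ℝ, ∫ u in Ioi (0:ℝ), Complex.exp (-(t:ℂ)^2 - 2*s*u + 2*I*t*u) := hswap.symm
    _ = ∫ t : ℝ, Complex.exp (-(t:ℂ)^2) * (2*s - 2*I*t)⁻¹ := by
        apply integral_congr_ae; filter_upwards with t; rw [hleft t]

lemma ws_rep {s : ℂ} (hs : 0 < s.re) :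
    ws s = (2/(Real.pi:ℂ)) * ∫ t : ℝ, Complex.exp (-(t:ℂ)^2) * (2*s - 2*I*t)⁻¹ := by
  have hs0 : s ≠ 0 := fun h => by rw [h] at hs; simp at hs
  have hπ : (Real.sqrt Real.pi : ℂ) ≠ 0 := by
    norm_cast
    exact (Real.sqrt_pos.mpr Real.pi_pos).ne'
  have hπ2 : (Real.sqrt Real.pi : ℂ) * (Real.sqrt Real.pi : ℂ) = (Real.pi : ℂ) := by
    norm_cast
    exact Real.mul_self_sqrt Real.pi_pos.le
  have hπ0 : (Real.pi : ℂ) ≠ 0 := by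
    norm_cast
    exact Real.pi_pos.ne'
  have hkey := key s hs0
  rw [ws, cerfc, cerf]
  rw [show (∫ t in (0:ℝ)..1, s * Complex.exp (-((t:ℂ) * s)^2))
      = (Real.sqrt Real.pi : ℂ)/2 - ∫ u in Ioi (0:ℝ), Complex.exp (-((u:ℂ) + s)^2) by
    linear_combination hkey]
  have hB : Complex.exp (s^2) * (∫ u in Ioi (0:ℝ), Complex.exp (-((u:ℂ) + s)^2))
      = ∫ u in Ioi (0:ℝ), Complex.exp (-(u:ℂ)^2 - 2*s*u) := by
    calc Complex.exp (s^2) * (∫ u in Ioi (0:ℝ), Complex.exp (-((u:ℂ) + s)^2))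
        = ∫ u in Ioi (0:ℝ), Complex.exp (s^2) * Complex.exp (-((u:ℂ) + s)^2) :=
          (integral_const_mul _ _).symm
      _ = ∫ u in Ioi (0:ℝ), Complex.exp (-(u:ℂ)^2 - 2*s*u) := by
          apply integral_congr_ae; filter_upwards with u
          rw [← Complex.exp_add]; congr 1; ring
  have hJ : (∫ t : ℝ, Complex.exp (-(t:ℂ)^2) * (2*s - 2*I*t)⁻¹)
      = (Real.sqrt Real.pi : ℂ) * (Complex.exp (s^2)
        * (∫ u in Ioi (0:ℝ), Complex.exp (-((u:ℂ) + s)^2))) := by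
    rw [hB]; exact (fubini_step hs).symm
  rw [hJ, ← hπ2]
  field_simp
  ring

lemma part2 {s : ℂ} (hs : 0 < s.re) : 0 ≤ (ws s).re := by
  have hne : ∀ t : ℝ, (2*s - 2*I*(t:ℂ)) ≠ 0 := by
    intro t h
    have h2 : (2*s - 2*I*(t:ℂ)).re = 0 := by rw [h]; simp
    have h3 : (2*s - 2*I*(t:ℂ)).re = 2*s.re := by
      simp [Complex.sub_re, Complex.mul_re]
    rw [h3] at h2
    linarith
  have hre2 : ∀ t : ℝ, (2*s - 2*I*(t:ℂ)).re = 2*s.re := by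
    intro t
    simp [Complex.sub_re, Complex.mul_re]
  have hcont : Continuous fun t : ℝ => Complex.exp (-(t:ℂ)^2) * (2*s - 2*I*(t:ℂ))⁻¹ := by
    apply Continuous.mul
    · apply Complex.continuous_exp.comp; fun_prop
    · exact ((continuous_const.sub (continuous_const.mul Complex.continuous_ofReal)).inv₀ hne)
  have hinteg : Integrable (fun t : ℝ => Complex.exp (-(t:ℂ)^2) * (2*s - 2*I*(t:ℂ))⁻¹) := by
    apply Integrable.mono' ((integrable_exp_neg_mul_sq one_pos).mul_const (2*s.re)⁻¹)
    · exact hcont.aestronglyMeasurable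
    · filter_upwards with t
      rw [norm_mul, norm_cexp', norm_inv]
      have e1 : (-(t:ℂ)^2).re = -1*t^2 := by
        simp [← Complex.ofReal_pow]
      rw [e1]
      apply mul_le_mul_of_nonneg_left _ (Real.exp_pos _).le
      apply inv_anti₀ (by linarith)
      calc 2*s.re = (2*s - 2*I*(t:ℂ)).re := (hre2 t).symm
        _ ≤ |(2*s - 2*I*(t:ℂ)).re| := le_abs_self _
        _ ≤ ‖2*s - 2*I*(t:ℂ)‖ := Complex.abs_re_le_norm _
  rw [ws_rep hs]
  rw [show (2/(Real.pi:ℂ)) = ((2/Real.pi : ℝ) : ℂ) by push_cast; ring]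
  rw [Complex.re_ofReal_mul]
  apply mul_nonneg (by positivity)
  have hir := integral_re hinteg (𝕜 := ℂ)
  simp only [RCLike.re_to_complex] at hir
  rw [← hir]
  apply integral_nonneg
  intro t
  simp only [Pi.zero_apply]
  show (0:ℝ) ≤ (Complex.exp (-(t:ℂ)^2) * (2*s - 2*I*(t:ℂ))⁻¹).re
  have e2 : Complex.exp (-(t:ℂ)^2) = ((Real.exp (-t^2) : ℝ) : ℂ) := by
    rw [Complex.ofReal_exp]
    norm_cast
  rw [e2, Complex.re_ofReal_mul]
  apply mul_nonneg (Real.exp_pos _).le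
  rw [Complex.inv_re]
  apply div_nonneg _ (Complex.normSq_nonneg _)
  rw [hre2 t]
  linarith


lemma ws_part1 (s : ℝ) : (ws (s : ℂ)).im = 0 := by
  have h : cerf (s : ℂ) = ((2 / Real.sqrt Real.pi) * ∫ t in (0:ℝ)..1, s * Real.exp (-(t*s)^2) : ℝ) := by
    rw [cerf]
    rw [show (∫ t in (0:ℝ)..1, (s:ℂ) * Complex.exp (-((t:ℂ) * s)^2))
        = ((∫ t in (0:ℝ)..1, s * Real.exp (-(t*s)^2) : ℝ) : ℂ) by
      rw [← intervalIntegral.integral_ofReal]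
      apply intervalIntegral.integral_congr
      intro t _
      push_cast
      ring_nf]
    push_cast
    ring
  rw [ws, cerfc, h]
  rw [show Complex.exp ((s:ℂ)^2) = ((Real.exp (s^2) : ℝ) : ℂ) by
    push_cast; ring_nf]
  rw [show (1 : ℂ) - ((2 / Real.sqrt Real.pi) * ∫ t in (0:ℝ)..1, s * Real.exp (-(t*s)^2) : ℝ)
      = (((1 - ((2 / Real.sqrt Real.pi) * ∫ t in (0:ℝ)..1, s * Real.exp (-(t*s)^2))) : ℝ) : ℂ) by
    push_cast; ring]
  rw [← Complex.ofReal_mul]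
  exact Complex.ofReal_im _


end WsAux

set_option maxHeartbeats 1000000 in
/-- `w_s` is a positive real function: real-valued on the real axis, and with
nonnegative real part on the open right half-plane. -/
theorem ws_positive_real_function :
    (∀ s : ℝ, (ws (s : ℂ)).im = 0) ∧ (∀ s : ℂ, 0 < s.re → 0 ≤ (ws s).re) :=
  ⟨ws_part1, fun _ hs => part2 hs⟩
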